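/- For every n ≥ 3, VP_n is the internal semidirect product V_n^* ⋊ VP_{n−1}: the subgroup V_n^* is normal in VP_n, its intersection with the image ι_n(VP_{n−1}) is trivial, and every element b ∈ VP_n has a unique factorization b = w · ι_n(v) with w ∈ V_n^* and v ∈ VP_{n−1}. -/

import Mathlib

/-- Generators of the pure virtual braid group `VP n`: ordered pairs of distinct
indices, the pair `(i, j)` corresponding to the generator `λ_{ij}`. -/
def Gen (n : ℕ) : Type := {p : Fin n × Fin n // p.1 ≠ p.2}

instance (n : ℕ) : DecidableEq (Gen n) :=
  fun a b => decidable_of_iff (a.1 = b.1) Subtype.ext_iff.symm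

/-- The generator `λ_{ij}` inside the free group on the generators. -/
def lamF {n : ℕ} {i j : Fin n} (h : i ≠ j) : FreeGroup (Gen n) :=
  FreeGroup.of ⟨(i, j), h⟩

/-- `s(ab) = 1` if `a < b`, and `-1` otherwise. -/
def sgn {n : ℕ} (a b : Fin n) : ℤ := if a < b then 1 else -1

/-- The defining relators of the pure virtual braid group `VP n`:
(1) `λ_{jk} λ_{im} = λ_{im} λ_{jk}` for pairwise distinct `i, j, k, m`;
(2) `λ_{ki}^{s(ki)} λ_{kj}^{s(kj)} λ_{ij}^{s(ij)} = λ_{ij}^{s(ij)} λ_{kj}^{s(kj)} λ_{ki}^{s(ki)}`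
for pairwise distinct `i, j, k`. -/
def vpRels (n : ℕ) : Set (FreeGroup (Gen n)) :=
  {r | ∃ (i j k m : Fin n) (hjk : j ≠ k) (him : i ≠ m),
      i ≠ j ∧ i ≠ k ∧ j ≠ m ∧ k ≠ m ∧
      r = lamF hjk * lamF him * (lamF hjk)⁻¹ * (lamF him)⁻¹} ∪
  {r | ∃ (i j k : Fin n) (hki : k ≠ i) (hkj : k ≠ j) (hij : i ≠ j),
      r = (lamF hki ^ sgn k i * lamF hkj ^ sgn k j * lamF hij ^ sgn i j) *
          (lamF hij ^ sgn i j * lamF hkj ^ sgn k j * lamF hki ^ sgn k i)⁻¹}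

/-- The pure virtual braid group on `n` strands, as a presented group. -/
abbrev VP (n : ℕ) : Type := PresentedGroup (vpRels n)

/-- The generator `λ_{ij}` of `VP n`. -/
def lam {n : ℕ} {i j : Fin n} (h : i ≠ j) : VP n := PresentedGroup.of ⟨(i, j), h⟩

/-- The order-preserving inclusion of indices `{1,…,n−1} ⊆ {1,…,n}`. -/
def emb (n : ℕ) : Fin (n - 1) → Fin n := Fin.castLE (Nat.sub_le n 1)

/-- The last index `n` (in one-based numbering) of `Fin n`. -/
def lastIdx (n : ℕ) (hn : 0 < n) : Fin n := ⟨n - 1, by omega⟩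

/-- The set `{λ_{in}, λ_{ni} : 1 ≤ i ≤ n−1}` whose normal closure is `V_n^*`. -/
def VstarSet (n : ℕ) (hn : 0 < n) : Set (VP n) :=
  {x | ∃ (i : Fin n) (hi : i ≠ lastIdx n hn), x = lam hi ∨ x = lam hi.symm}

section Aux

variable {n : ℕ}

/-- Restriction of an index `i : Fin n` with `i.val < n - 1` to `Fin (n-1)`. -/
def res (i : Fin n) (h : i.val < n - 1) : Fin (n - 1) := ⟨i.val, h⟩

lemma res_ne {i j : Fin n} (h : i ≠ j) {hi : i.val < n - 1} {hj : j.val < n - 1} :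
    res i hi ≠ res j hj := by
  intro he
  apply h
  have hv := congrArg Fin.val he
  exact Fin.ext hv

lemma emb_res (i : Fin n) (h : i.val < n - 1) : emb n (res i h) = i := Fin.ext rfl

@[simp] lemma sgn_res {i j : Fin n} {hi : i.val < n - 1} {hj : j.val < n - 1} :
    sgn (res i hi) (res j hj) = sgn i j := rfl

lemma lam_eq_mk {i j : Fin n} (h : i ≠ j) :
    lam h = PresentedGroup.mk (vpRels n) (lamF h) := rfl

lemma lam_congr {i j i' j' : Fin n} (h : i ≠ j) (h' : i' ≠ j')
    (e1 : i = i') (e2 : j = j') : lam h = lam h' := by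
  subst e1; subst e2; rfl

lemma rel_eq_one {r : FreeGroup (Gen n)} (hr : r ∈ vpRels n) :
    PresentedGroup.mk (vpRels n) r = 1 :=
  (QuotientGroup.eq_one_iff _).2 (Subgroup.subset_normalClosure hr)

lemma vp_rel1 {i j k m : Fin n} (hjk : j ≠ k) (him : i ≠ m)
    (hij : i ≠ j) (hik : i ≠ k) (hjm : j ≠ m) (hkm : k ≠ m) :
    lam hjk * lam him = lam him * lam hjk := by
  have key : PresentedGroup.mk (vpRels n) (lamF hjk) * PresentedGroup.mk (vpRels n) (lamF him) =
      PresentedGroup.mk (vpRels n) (lamF him) * PresentedGroup.mk (vpRels n) (lamF hjk) := by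
    have := rel_eq_one (n := n)
      (Or.inl ⟨i, j, k, m, hjk, him, hij, hik, hjm, hkm, rfl⟩)
    rw [map_mul, map_mul, map_mul, map_inv, map_inv] at this
    calc PresentedGroup.mk (vpRels n) (lamF hjk) * PresentedGroup.mk (vpRels n) (lamF him)
        = (PresentedGroup.mk (vpRels n) (lamF hjk) * PresentedGroup.mk (vpRels n) (lamF him) *
            (PresentedGroup.mk (vpRels n) (lamF hjk))⁻¹ * (PresentedGroup.mk (vpRels n) (lamF him))⁻¹) *
          (PresentedGroup.mk (vpRels n) (lamF him) * PresentedGroup.mk (vpRels n) (lamF hjk)) := by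
            group
      _ = PresentedGroup.mk (vpRels n) (lamF him) * PresentedGroup.mk (vpRels n) (lamF hjk) := by
            rw [this, one_mul]
  simpa [lam_eq_mk] using key

lemma vp_rel2 {i j k : Fin n} (hki : k ≠ i) (hkj : k ≠ j) (hij : i ≠ j) :
    lam hki ^ sgn k i * lam hkj ^ sgn k j * lam hij ^ sgn i j =
    lam hij ^ sgn i j * lam hkj ^ sgn k j * lam hki ^ sgn k i := by
  have h := rel_eq_one (n := n) (Or.inr ⟨i, j, k, hki, hkj, hij, rfl⟩)
  rw [map_mul, map_inv, mul_inv_eq_one] at h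
  simpa [lam_eq_mk, map_mul, map_zpow] using h

/-- The value of the retraction `VP n → VP (n-1)` on a generator. -/
def projGen (n : ℕ) : Gen n → VP (n - 1) := fun g =>
  if h : g.1.1.val < n - 1 ∧ g.1.2.val < n - 1 then
    lam (res_ne g.2 (hi := h.1) (hj := h.2))
  else 1

lemma projGen_eq {i j : Fin n} (h : i ≠ j) (hi : i.val < n - 1) (hj : j.val < n - 1) :
    projGen n ⟨(i, j), h⟩ = lam (res_ne h (hi := hi) (hj := hj)) := dif_pos ⟨hi, hj⟩

lemma projGen_one {i j : Fin n} (h : i ≠ j) (hnot : ¬(i.val < n - 1 ∧ j.val < n - 1)) :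
    projGen n ⟨(i, j), h⟩ = 1 := dif_neg hnot

lemma lift_lamF {G : Type*} [Group G] (f : Gen n → G) {i j : Fin n} (h : i ≠ j) :
    FreeGroup.lift f (lamF h) = f ⟨(i, j), h⟩ := FreeGroup.lift_apply_of

lemma projGen_rels (n : ℕ) : ∀ r ∈ vpRels n, FreeGroup.lift (projGen n) r = 1 := by
  rintro r (⟨i, j, k, m, hjk, him, hij, hik, hjm, hkm, rfl⟩ | ⟨i, j, k, hki, hkj, hij, rfl⟩)
  · have key : projGen n ⟨(j, k), hjk⟩ * projGen n ⟨(i, m), him⟩ =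
        projGen n ⟨(i, m), him⟩ * projGen n ⟨(j, k), hjk⟩ := by
      by_cases h1 : j.val < n - 1 ∧ k.val < n - 1
      · by_cases h2 : i.val < n - 1 ∧ m.val < n - 1
        · rw [projGen_eq hjk h1.1 h1.2, projGen_eq him h2.1 h2.2]
          exact vp_rel1 (res_ne hjk) (res_ne him) (res_ne hij) (res_ne hik)
            (res_ne hjm) (res_ne hkm)
        · rw [projGen_one him h2, mul_one, one_mul]
      · rw [projGen_one hjk h1, mul_one, one_mul]
    simp only [map_mul, map_inv, lift_lamF]
    rw [key]; group
  · simp only [map_mul, map_inv, map_zpow, lift_lamF]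
    rw [mul_inv_eq_one]
    by_cases hk : k.val < n - 1
    · by_cases hi : i.val < n - 1
      · by_cases hj : j.val < n - 1
        · rw [projGen_eq hki hk hi, projGen_eq hkj hk hj, projGen_eq hij hi hj]
          have h2 := vp_rel2 (res_ne hki (hi := hk) (hj := hi))
            (res_ne hkj (hi := hk) (hj := hj)) (res_ne hij (hi := hi) (hj := hj))
          simpa [sgn_res] using h2
        · rw [projGen_one hkj (fun hc => hj hc.2), projGen_one hij (fun hc => hj hc.2)]
          simp
      · rw [projGen_one hki (fun hc => hi hc.2), projGen_one hij (fun hc => hi hc.1)]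
        simp
    · rw [projGen_one hki (fun hc => hk hc.1), projGen_one hkj (fun hc => hk hc.1)]
      simp

end Aux

/-- For `n ≥ 3`, `VP n` is the internal semidirect product `V_n^* ⋊ VP (n-1)`:
`V_n^*` is normal in `VP n`, its intersection with the image of the inclusion
`ι_n : VP (n-1) →* VP n` (determined by `λ_{ij} ↦ λ_{ij}`) is trivial, and every
`b ∈ VP n` factors uniquely as `b = w * ι_n v` with `w ∈ V_n^*` and `v ∈ VP (n-1)`. -/
theorem stmt_3 (n : ℕ) (hn : 3 ≤ n) (ι : VP (n - 1) →* VP n)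
    (hι : ∀ (a b : Fin (n - 1)) (hab : a ≠ b) (hab' : emb n a ≠ emb n b),
      ι (lam hab) = lam hab') :
    (Subgroup.normalClosure (VstarSet n (by omega))).Normal ∧
    Subgroup.normalClosure (VstarSet n (by omega)) ⊓ ι.range = ⊥ ∧
    ∀ b : VP n, ∃! p : Subgroup.normalClosure (VstarSet n (by omega)) × VP (n - 1),
      b = (p.1 : VP n) * ι p.2 := by
  have hn0 : 0 < n := by omega
  set π : VP n →* VP (n - 1) := PresentedGroup.toGroup (projGen_rels n) with hπdef
  have π_of : ∀ {i j : Fin n} (h : i ≠ j), π (lam h) = projGen n ⟨(i, j), h⟩ :=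
    fun {i j} h => PresentedGroup.toGroup.of (projGen_rels n)
  -- π is a retraction of ι
  have hπι : ∀ v : VP (n - 1), π (ι v) = v := by
    have hcomp : π.comp ι = MonoidHom.id _ := by
      refine PresentedGroup.ext fun x => ?_
      obtain ⟨⟨a, b⟩, hab⟩ := x
      have hab' : emb n a ≠ emb n b := fun h => hab (Fin.castLE_injective _ h)
      show π (ι (lam hab)) = lam hab
      exact (congrArg π (hι a b hab hab')).trans ((π_of hab').trans
        ((projGen_eq hab' a.isLt b.isLt).trans
          (lam_congr _ hab (Fin.ext rfl) (Fin.ext rfl))))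
    intro v
    exact DFunLike.congr_fun hcomp v
  set N : Subgroup (VP n) := Subgroup.normalClosure (VstarSet n hn0) with hNdef
  -- generators of N vanish under π
  have hNker : N ≤ π.ker := by
    apply Subgroup.normalClosure_le_normal
    rintro x ⟨i, hi, rfl | rfl⟩
    · have : π (lam hi) = 1 := by
        rw [π_of hi, projGen_one hi (fun hc => absurd hc.2 (lt_irrefl _))]
      exact this
    · have : π (lam hi.symm) = 1 := by
        rw [π_of hi.symm, projGen_one hi.symm (fun hc => absurd hc.1 (lt_irrefl _))]
      exact this
  -- generators with an index equal to the last index lie in N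
  have hgen_mem : ∀ (i j : Fin n) (hij : i ≠ j),
      ¬(i.val < n - 1 ∧ j.val < n - 1) → lam hij ∈ N := by
    intro i j hij h
    apply Subgroup.subset_normalClosure
    rcases not_and_or.mp h with h1 | h2
    · have hi : i = lastIdx n hn0 := Fin.ext (by have := i.isLt; simp [lastIdx]; omega)
      have hj : j ≠ lastIdx n hn0 := by rw [← hi]; exact hij.symm
      exact ⟨j, hj, Or.inr (lam_congr hij hj.symm hi rfl)⟩
    · have hj : j = lastIdx n hn0 := Fin.ext (by have := j.isLt; simp [lastIdx]; omega)
      have hi : i ≠ lastIdx n hn0 := by rw [← hj]; exact hij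
      exact ⟨i, hi, Or.inl (lam_congr hij hi rfl hj)⟩
  set q : VP n →* VP n ⧸ N := QuotientGroup.mk' N with hqdef
  have hq_one : ∀ x : VP n, q x = 1 ↔ x ∈ N := fun x => QuotientGroup.eq_one_iff x
  -- q ∘ ι ∘ π = q
  have hq : ∀ b : VP n, q (ι (π b)) = q b := by
    have hcomp : q.comp (ι.comp π) = q := by
      refine PresentedGroup.ext fun x => ?_
      obtain ⟨⟨i, j⟩, hij⟩ := x
      show q (ι (π (lam hij))) = q (lam hij)
      by_cases h : i.val < n - 1 ∧ j.val < n - 1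
      · have h' : emb n (res i h.1) ≠ emb n (res j h.2) := by
          intro he
          have hv := congrArg Fin.val he
          exact hij (Fin.ext hv)
        have e1 : π (lam hij) = lam (res_ne hij (hi := h.1) (hj := h.2)) :=
          (π_of hij).trans (projGen_eq hij h.1 h.2)
        have e2 : ι (lam (res_ne hij (hi := h.1) (hj := h.2))) = lam h' :=
          hι _ _ _ h'
        have e3 : lam h' = lam hij := lam_congr h' hij (emb_res i h.1) (emb_res j h.2)
        exact (congrArg (fun z => q (ι z)) e1).trans (congrArg q (e2.trans e3))
      · rw [π_of hij, projGen_one hij h, map_one, map_one]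
        exact ((hq_one _).2 (hgen_mem i j hij h)).symm
    intro b
    exact DFunLike.congr_fun hcomp b
  have hfact : ∀ b : VP n, b * (ι (π b))⁻¹ ∈ N := by
    intro b
    refine (hq_one _).1 ?_
    rw [map_mul, map_inv, hq b, mul_inv_cancel]
  refine ⟨Subgroup.normalClosure_normal, ?_, ?_⟩
  · rw [eq_bot_iff]
    rintro x ⟨hxN, v, rfl⟩
    have hx1 : π (ι v) = 1 := hNker hxN
    rw [hπι v] at hx1
    rw [hx1, map_one]
    exact Subgroup.mem_bot.mpr rfl
  · intro b
    refine ⟨(⟨b * (ι (π b))⁻¹, hfact b⟩, π b),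
      (inv_mul_cancel_right b (ι (π b))).symm, ?_⟩
    rintro ⟨w, v⟩ hbv
    have hπw : π (w : VP n) = 1 := hNker w.2
    have hv : v = π b := by rw [hbv, map_mul, hπw, one_mul, hπι]
    have hw : (w : VP n) = b * (ι (π b))⁻¹ := by
      rw [← hv, hbv, mul_inv_cancel_right]
    exact Prod.ext (Subtype.ext hw) hv
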